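/- A 2-connected non-geodetic signed graph Σ is incompatible if and only if Σ contains a negative even cycle C_{2k} possessing two diametrically opposite vertices u and v on C_{2k} such that d_Σ(u,v) = k (i.e., there is no u–v path in Σ of length less than k). -/

import Mathlib

open SimpleGraph

/-- The sign of a walk: the product of the signs of its edges. -/
def walkSign {V : Type*} {G : SimpleGraph V} (σ : V → V → ℤ) :
    {u v : V} → G.Walk u v → ℤ
  | _, _, SimpleGraph.Walk.nil => 1
  | _, _, @SimpleGraph.Walk.cons _ _ a b _ _ p => σ a b * walkSign σ p

/-- A walk is a shortest path if its length equals the distance of its endpoints. -/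
def IsShortest {V : Type*} {G : SimpleGraph V} {u v : V} (p : G.Walk u v) : Prop :=
  p.length = G.dist u v

/-- Two vertices are compatible if all shortest paths between them have the same sign. -/
def PairCompatible {V : Type*} (G : SimpleGraph V) (σ : V → V → ℤ) (u v : V) : Prop :=
  ∀ p q : G.Walk u v, IsShortest p → IsShortest q → walkSign σ p = walkSign σ q

/-- A graph is 2-connected: connected, and still connected after deleting any vertex. -/
def TwoConnected {V : Type*} (G : SimpleGraph V) : Prop :=
  G.Connected ∧ ∀ v : V, (G.induce {u : V | u ≠ v}).Connected

/-- A graph is geodetic if between any two vertices there is a unique shortest path. -/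
def Geodetic {V : Type*} (G : SimpleGraph V) : Prop :=
  ∀ (u v : V) (p q : G.Walk u v), IsShortest p → IsShortest q → p = q

section Aux

variable {V : Type*} {G : SimpleGraph V} {σ : V → V → ℤ}

lemma walkSign_append {u v w : V} (p : G.Walk u v) (q : G.Walk v w) :
    walkSign σ (p.append q) = walkSign σ p * walkSign σ q := by
  induction p with
  | nil => simp [walkSign]
  | cons h p ih => simp [walkSign, ih, mul_assoc]

lemma walkSign_reverse (hsymm : ∀ u v : V, σ u v = σ v u) {u v : V} (p : G.Walk u v) :
    walkSign σ p.reverse = walkSign σ p := by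
  induction p with
  | nil => rfl
  | cons h p ih =>
    rw [SimpleGraph.Walk.reverse_cons, walkSign_append, ih]
    simp [walkSign, hsymm _ _, mul_comm]

lemma walkSign_unit (hσ : ∀ u v : V, G.Adj u v → σ u v = 1 ∨ σ u v = -1)
    {u v : V} (p : G.Walk u v) : walkSign σ p = 1 ∨ walkSign σ p = -1 := by
  induction p with
  | nil => left; rfl
  | cons h p ih =>
    rcases hσ _ _ h with h1 | h1 <;> rcases ih with h2 | h2 <;>
      simp [walkSign, h1, h2]

lemma walkSign_of_length_zero {u v : V} (p : G.Walk u v) (h : p.length = 0) :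
    walkSign σ p = 1 := by
  cases p with
  | nil => rfl
  | cons _ _ => simp at h

lemma walkSign_of_length_one {u v : V} (p : G.Walk u v) (h : p.length = 1) :
    walkSign σ p = σ u v := by
  cases p with
  | nil => simp at h
  | cons ha q =>
    have hq : q.length = 0 := by simpa using h
    have := SimpleGraph.Walk.eq_of_length_eq_zero hq
    subst this
    simp [walkSign, walkSign_of_length_zero q hq]

lemma cycle_of_two_paths {u v : V} (p q : G.Walk u v)
    (hp : p.IsPath) (hq : q.IsPath) (huv : u ≠ v) (hnadj : ¬ G.Adj u v)
    (hdisj : ∀ w, w ∈ p.support → w ∈ q.support → w = u ∨ w = v) :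
    (p.append q.reverse).IsCycle := by
  rw [SimpleGraph.Walk.isCycle_def]
  refine ⟨?_, ?_, ?_⟩
  · rw [SimpleGraph.Walk.isTrail_def, SimpleGraph.Walk.edges_append,
      SimpleGraph.Walk.edges_reverse, List.nodup_append]
    refine ⟨hp.isTrail.edges_nodup, (List.nodup_reverse).mpr hq.isTrail.edges_nodup, ?_⟩
    intro e hep e' heq hee'
    subst hee'
    rw [List.mem_reverse] at heq
    induction e using Sym2.ind with
    | _ a b =>
      have hadj : G.Adj a b := SimpleGraph.Walk.adj_of_mem_edges p hep
      have hab : a ≠ b := hadj.ne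
      have ha := hdisj a (SimpleGraph.Walk.fst_mem_support_of_mem_edges p hep)
        (SimpleGraph.Walk.fst_mem_support_of_mem_edges q heq)
      have hb := hdisj b (SimpleGraph.Walk.snd_mem_support_of_mem_edges p hep)
        (SimpleGraph.Walk.snd_mem_support_of_mem_edges q heq)
      rcases ha with rfl | rfl <;> rcases hb with rfl | rfl
      · exact hab rfl
      · exact hnadj hadj
      · exact hnadj hadj.symm
      · exact hab rfl
  · intro hc
    have h0 : (p.append q.reverse).length = 0 := by rw [hc]; rfl
    rw [SimpleGraph.Walk.length_append] at h0
    exact huv (SimpleGraph.Walk.eq_of_length_eq_zero (p := p) (by omega))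
  · rw [SimpleGraph.Walk.tail_support_append, List.nodup_append]
    refine ⟨hp.support_nodup.tail, hq.reverse.support_nodup.tail, ?_⟩
    intro x hx1 y hx2 hxy
    subst hxy
    have hxp : x ∈ p.support := List.mem_of_mem_tail hx1
    have hxq : x ∈ q.support := by
      have := List.mem_of_mem_tail hx2
      rwa [SimpleGraph.Walk.support_reverse, List.mem_reverse] at this
    have hxu : x ≠ u := by
      intro h; subst h
      have := hp.support_nodup
      rw [p.support_eq_cons] at this
      exact (List.nodup_cons.mp this).1 hx1
    have hxv : x ≠ v := by
      intro h; subst h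
      have := hq.reverse.support_nodup
      rw [q.reverse.support_eq_cons] at this
      exact (List.nodup_cons.mp this).1 hx2
    rcases hdisj x hxp hxq with h | h
    · exact hxu h
    · exact hxv h

end Aux

/-- A 2-connected non-geodetic signed graph is incompatible if and only if it has a
negative even cycle `C_{2k}` with two diametrically opposite vertices `u` and `v`
(so `C_{2k}` is the union of two `u`–`v` paths of length `k`) such that there is no
shortest path between `u` and `v` of length less than `k`, i.e. `d(u,v) = k`. -/
theorem incompatible_iff_negative_even_cycle {V : Type*} (G : SimpleGraph V)
    (σ : V → V → ℤ)
    (hσ : ∀ u v : V, G.Adj u v → σ u v = 1 ∨ σ u v = -1)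
    (hsymm : ∀ u v : V, σ u v = σ v u)
    (h2c : TwoConnected G) (hng : ¬ Geodetic G) :
    (∃ u v : V, ¬ PairCompatible G σ u v) ↔
      ∃ (k : ℕ) (u v : V) (p q : G.Walk u v), 0 < k ∧
        p.length = k ∧ q.length = k ∧
        (p.append q.reverse).IsCycle ∧
        walkSign σ (p.append q.reverse) = -1 ∧
        G.dist u v = k := by
  constructor
  · rintro ⟨u0, v0, h0⟩
    classical
    have hP : ∃ n : ℕ, ∃ u v : V, G.dist u v = n ∧ ¬ PairCompatible G σ u v :=
      ⟨G.dist u0 v0, u0, v0, rfl, h0⟩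
    obtain ⟨u, v, hdist, hpc⟩ := Nat.find_spec hP
    set n := Nat.find hP with hn
    unfold PairCompatible at hpc
    push_neg at hpc
    obtain ⟨p, q, hsp, hsq, hne⟩ := hpc
    have hsp' : p.length = G.dist u v := hsp
    have hsq' : q.length = G.dist u v := hsq
    have hpl : p.length = n := hsp'.trans hdist
    have hql : q.length = n := hsq'.trans hdist
    have hn0 : n ≠ 0 := by
      intro h
      apply hne
      rw [walkSign_of_length_zero p (by omega), walkSign_of_length_zero q (by omega)]
    have hn1 : n ≠ 1 := by
      intro h
      apply hne
      rw [walkSign_of_length_one p (by omega), walkSign_of_length_one q (by omega)]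
    have huv : u ≠ v := by
      intro h; subst h; rw [SimpleGraph.dist_self] at hdist; omega
    have hnadj : ¬ G.Adj u v := by
      intro h
      have := (SimpleGraph.dist_eq_one_iff_adj (G := G)).mpr h
      omega
    have hdisj : ∀ w, w ∈ p.support → w ∈ q.support → w = u ∨ w = v := by
      intro w hwp hwq
      by_contra hcon
      push_neg at hcon
      obtain ⟨hwu, hwv⟩ := hcon
      have hpspec := p.take_spec hwp
      have hqspec := q.take_spec hwq
      have hplen : (p.takeUntil w hwp).length + (p.dropUntil w hwp).length = n := by
        rw [← SimpleGraph.Walk.length_append, hpspec, hpl]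
      have hqlen : (q.takeUntil w hwq).length + (q.dropUntil w hwq).length = n := by
        rw [← SimpleGraph.Walk.length_append, hqspec, hql]
      have h1 : G.dist u w ≤ (p.takeUntil w hwp).length := SimpleGraph.dist_le _
      have h2 : G.dist w v ≤ (p.dropUntil w hwp).length := SimpleGraph.dist_le _
      have h3 : G.dist u w ≤ (q.takeUntil w hwq).length := SimpleGraph.dist_le _
      have h4 : G.dist w v ≤ (q.dropUntil w hwq).length := SimpleGraph.dist_le _
      have htri : G.dist u v ≤ G.dist u w + G.dist w v := h2c.1.dist_triangle
      have hp1pos : 0 < (p.takeUntil w hwp).length := by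
        rcases Nat.eq_zero_or_pos (p.takeUntil w hwp).length with h | h
        · exact absurd (SimpleGraph.Walk.eq_of_length_eq_zero h).symm hwu
        · exact h
      have hp2pos : 0 < (p.dropUntil w hwp).length := by
        rcases Nat.eq_zero_or_pos (p.dropUntil w hwp).length with h | h
        · exact absurd (SimpleGraph.Walk.eq_of_length_eq_zero h) hwv
        · exact h
      have e1 : (p.takeUntil w hwp).length = G.dist u w := by omega
      have e2 : (p.dropUntil w hwp).length = G.dist w v := by omega
      have e3 : (q.takeUntil w hwq).length = G.dist u w := by omega
      have e4 : (q.dropUntil w hwq).length = G.dist w v := by omega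
      have hlt1 : G.dist u w < n := by omega
      have hlt2 : G.dist w v < n := by omega
      have hc1 : PairCompatible G σ u w := by
        by_contra hc
        exact Nat.find_min hP hlt1 ⟨u, w, rfl, hc⟩
      have hc2 : PairCompatible G σ w v := by
        by_contra hc
        exact Nat.find_min hP hlt2 ⟨w, v, rfl, hc⟩
      apply hne
      rw [← hpspec, ← hqspec, walkSign_append, walkSign_append,
        hc1 _ _ e1 e3, hc2 _ _ e2 e4]
    have hpp : p.IsPath := p.isPath_of_length_eq_dist hsp'
    have hqp : q.IsPath := q.isPath_of_length_eq_dist hsq'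
    refine ⟨n, u, v, p, q, by omega, hpl, hql,
      cycle_of_two_paths p q hpp hqp huv hnadj hdisj, ?_, hdist⟩
    rw [walkSign_append, walkSign_reverse hsymm]
    rcases walkSign_unit hσ p with h1 | h1 <;> rcases walkSign_unit hσ q with h2 | h2 <;>
      rw [h1, h2] at hne ⊢ <;> first | exact absurd rfl hne | norm_num
  · rintro ⟨k, u, v, p, q, hk, hpl, hql, hcyc, hsign, hdist⟩
    refine ⟨u, v, fun hcomp => ?_⟩
    have hsp : IsShortest p := by show p.length = G.dist u v; rw [hdist]; exact hpl
    have hsq : IsShortest q := by show q.length = G.dist u v; rw [hdist]; exact hql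
    have heq := hcomp p q hsp hsq
    rw [walkSign_append, walkSign_reverse hsymm, ← heq] at hsign
    rcases walkSign_unit hσ p with h1 | h1 <;> rw [h1] at hsign <;> norm_num at hsign
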